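/- Let n ≥ 1 and let A ⊂ ℝⁿ be a bounded set. Assume there exists ρ > 0 such that for every x in the topological boundary ∂A there is an open ball B ⊂ ℝⁿ of radius ρ with x ∈ ∂B and B ⊂ A. Then ∂A has n-dimensional Lebesgue measure zero. -/

import Mathlib

open MeasureTheory Real Filter Metric Asymptotics
open scoped ENNReal NNReal Topology ComplexConjugate

noncomputable section

/-- `ℝ^d` as a Euclidean space. -/
abbrev Euc (d : ℕ) : Type := EuclideanSpace ℝ (Fin d)

/-- `ω_k`, the Lebesgue measure of the unit ball in `ℝ^k`. -/
def ballVol (k : ℕ) : ℝ := (volume (Metric.ball (0 : Euc k) 1)).toReal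

/-- The semiclassical constant `L¹_k = (2/(k+2))·(2π)^{-k}·ω_k`. -/
def weylL1 (k : ℕ) : ℝ := (2 / ((k : ℝ) + 2)) * (2 * π) ^ (-(k : ℝ)) * ballVol k

/-- `|𝕊^{d-2}|`, the surface measure of the unit sphere in `ℝ^{d-1}`. -/
def sphereArea (d : ℕ) : ℝ := (μH[(d : ℝ) - 2] (Metric.sphere (0 : Euc (d - 1)) 1)).toReal

/-- The constant `C_d = 4·|𝕊^{d-2}|·(2π)^{-d}·(d²-1)⁻¹`. -/
def constCd (d : ℕ) : ℝ := 4 * sphereArea d * (2 * π) ^ (-(d : ℝ)) * ((d : ℝ) ^ 2 - 1)⁻¹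

/-- Negative part `x₋ = max(-x,0)`. -/
def nPart (x : ℝ) : ℝ := max (-x) 0

/-- The boundary coefficient `L²_d(b)`. -/
def weylL2 (d : ℕ) (b : ℝ) : ℝ :=
  if 0 < b then
    constCd d * (-(π / 4) +
      ∫ p in (0 : ℝ)..1, (1 - p ^ 2) ^ (((d : ℝ) + 1) / 2) * b / (b ^ 2 + p ^ 2))
  else if b = 0 then constCd d * (π / 4)
  else
    constCd d * (-(π / 4) +
      (∫ p in (0 : ℝ)..1, (1 - p ^ 2) ^ (((d : ℝ) + 1) / 2) * b / (b ^ 2 + p ^ 2)) +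
      π * (b ^ 2 + 1) ^ (((d : ℝ) + 1) / 2))

/-- First `d-1` coordinates `x'` of `x ∈ ℝ^d`. -/
def firstCoords (d : ℕ) (x : Euc d) : Euc (d - 1) :=
  WithLp.toLp 2 fun i => x (Fin.castLE (Nat.sub_le d 1) i)

/-- Last coordinate `x_d` of `x ∈ ℝ^d`. -/
def lastCoord (d : ℕ) (x : Euc d) : ℝ :=
  if h : 0 < d then x ⟨d - 1, Nat.sub_lt h Nat.one_pos⟩ else 0

/-- The point `(x',0) ∈ ℝ^d` corresponding to `x' ∈ ℝ^{d-1}`. -/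
def embedBdry (d : ℕ) (x' : Euc (d - 1)) : Euc d :=
  WithLp.toLp 2 fun i => if h : (i : ℕ) < d - 1 then x' ⟨(i : ℕ), h⟩ else 0

/-- The open region above the graph of `f : ℝ^{d-1} → ℝ`. -/
def upperGraph (d : ℕ) (f : Euc (d - 1) → ℝ) : Set (Euc d) :=
  {x | f (firstCoords d x) < lastCoord d x}

/-- The upper half-space `ℝ^d_+`. -/
def upperHalf (d : ℕ) : Set (Euc d) := {x | 0 < lastCoord d x}

/-- The boundary-straightening map `(x',x_d) ↦ (x', x_d - f(x'))`. -/
def straighten (d : ℕ) (f : Euc (d - 1) → ℝ) (x : Euc d) : Euc d :=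
  WithLp.toLp 2 fun i => if (i : ℕ) < d - 1 then x i else x i - f (firstCoords d x)

/-- `Ω` has `C¹` boundary with modulus of continuity `ω` for the gradients of the local charts:
at every boundary point there is an orthonormal coordinate system (an affine isometry `A`
centered at `x₀`), a radius `r > 0` and a `C¹` graph function `f` with `f 0 = 0`, `∇f(0) = 0`,
whose gradient has modulus of continuity `ω`, representing `Ω` locally as the region above
the graph of `f`. -/
def IsC1BoundaryWith (d : ℕ) (Ω : Set (Euc d)) (ω : ℝ → ℝ) : Prop :=
  ∀ x₀ ∈ frontier Ω, ∃ (A : Euc d ≃ᵃⁱ[ℝ] Euc d) (r : ℝ) (f : Euc (d - 1) → ℝ),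
    A 0 = x₀ ∧ 0 < r ∧ ContDiff ℝ 1 f ∧ f 0 = 0 ∧ fderiv ℝ f 0 = 0 ∧
    (∀ x' y', ‖fderiv ℝ f x' - fderiv ℝ f y'‖ ≤ ω (dist x' y')) ∧
    Ω ∩ Metric.ball x₀ r = (A '' upperGraph d f) ∩ Metric.ball x₀ r

/-- `Ω` has uniform `C¹` boundary: there is a common modulus of continuity, vanishing at `0`,
for the gradients of all local charts. -/
def HasC1Boundary (d : ℕ) (Ω : Set (Euc d)) : Prop :=
  ∃ ω : ℝ → ℝ, Monotone ω ∧ Tendsto ω (𝓝[>] (0 : ℝ)) (𝓝 0) ∧ IsC1BoundaryWith d Ω ω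

/-- `Ω` has Lipschitz boundary. -/
def HasLipschitzBoundary (d : ℕ) (Ω : Set (Euc d)) : Prop :=
  ∀ x₀ ∈ frontier Ω, ∃ (A : Euc d ≃ᵃⁱ[ℝ] Euc d) (r : ℝ) (f : Euc (d - 1) → ℝ) (K : ℝ≥0),
    A 0 = x₀ ∧ 0 < r ∧ LipschitzWith K f ∧
    Ω ∩ Metric.ball x₀ r = (A '' upperGraph d f) ∩ Metric.ball x₀ r

/-- `|∇w|²` for a complex-valued function `w`, i.e. `|∇(Re w)|² + |∇(Im w)|²`. -/
def gradSqC (d : ℕ) (w : Euc d → ℂ) (x : Euc d) : ℝ :=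
  ‖gradient (fun y => (w y).re) x‖ ^ 2 + ‖gradient (fun y => (w y).im) x‖ ^ 2

/-- `Tr(H(b))₋`: the variational trace of the negative part of the Robin operator
`h²(-Δ) - 1` on `Ω` with boundary coefficient `b`. -/
def robinTrace (d : ℕ) (Ω : Set (Euc d)) (b : Euc d → ℝ) (h : ℝ) : ℝ :=
  sSup {T : ℝ | ∃ (N : ℕ) (v : Fin N → Euc d → ℂ),
    (∀ j, ContDiff ℝ 1 (v j)) ∧
    (∀ j k, (∫ x in Ω, conj (v j x) * v k x) = if j = k then 1 else 0) ∧
    T = ∑ j, ((∫ x in Ω, ‖v j x‖ ^ 2)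
        - h ^ 2 * (∫ x in Ω, gradSqC d (v j) x)
        - h * (∫ x in frontier Ω, b x * ‖v j x‖ ^ 2 ∂(μH[(d : ℝ) - 1])))}

/-- `Tr(φ H(b) φ)₋`: variational trace of the localized Robin operator on `Ω`. -/
def locTrace (d : ℕ) (Ω : Set (Euc d)) (b : Euc d → ℝ) (φ : Euc d → ℝ) (h : ℝ) : ℝ :=
  sSup {T : ℝ | ∃ (N : ℕ) (v : Fin N → Euc d → ℂ),
    (∀ j, ContDiff ℝ 1 (v j)) ∧
    (∀ j k, (∫ x in Ω, conj (v j x) * v k x) = if j = k then 1 else 0) ∧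
    T = ∑ j, ((∫ x in Ω, φ x ^ 2 * ‖v j x‖ ^ 2)
        - h ^ 2 * (∫ x in Ω, gradSqC d (fun y => (φ y : ℂ) * v j y) x)
        - h * (∫ x in frontier Ω,
            b x * (φ x ^ 2 * ‖v j x‖ ^ 2) ∂(μH[(d : ℝ) - 1])))}

/-- `Tr(φ(-Δ_b - Λ)φ)₋`: variational trace of the localized Robin operator at energy `Λ`. -/
def locTraceL (d : ℕ) (Ω : Set (Euc d)) (b : Euc d → ℝ) (φ : Euc d → ℝ) (Λ : ℝ) : ℝ :=
  sSup {T : ℝ | ∃ (N : ℕ) (v : Fin N → Euc d → ℂ),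
    (∀ j, ContDiff ℝ 1 (v j)) ∧
    (∀ j k, (∫ x in Ω, conj (v j x) * v k x) = if j = k then 1 else 0) ∧
    T = ∑ j, (Λ * (∫ x in Ω, φ x ^ 2 * ‖v j x‖ ^ 2)
        - (∫ x in Ω, gradSqC d (fun y => (φ y : ℂ) * v j y) x)
        - (∫ x in frontier Ω,
            b x * (φ x ^ 2 * ‖v j x‖ ^ 2) ∂(μH[(d : ℝ) - 1])))}

/-- `Tr(φ(-h²Δ-1)φ)₋` on all of `ℝ^d` (no boundary). -/
def freeTrace (d : ℕ) (φ : Euc d → ℝ) (h : ℝ) : ℝ :=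
  sSup {T : ℝ | ∃ (N : ℕ) (v : Fin N → Euc d → ℂ),
    (∀ j, ContDiff ℝ 1 (v j)) ∧
    (∀ j k, (∫ x, conj (v j x) * v k x) = if j = k then 1 else 0) ∧
    T = ∑ j, ((∫ x, φ x ^ 2 * ‖v j x‖ ^ 2)
        - h ^ 2 * (∫ x, gradSqC d (fun y => (φ y : ℂ) * v j y) x))}

/-- `Tr(φ H⁺(b) φ)₋`: variational trace of the localized Robin operator on the half-space. -/
def halfTrace (d : ℕ) (b : ℝ) (φ : Euc d → ℝ) (h : ℝ) : ℝ :=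
  sSup {T : ℝ | ∃ (N : ℕ) (v : Fin N → Euc d → ℂ),
    (∀ j, ContDiff ℝ 1 (v j)) ∧
    (∀ j k, (∫ x in upperHalf d, conj (v j x) * v k x) = if j = k then 1 else 0) ∧
    T = ∑ j, ((∫ x in upperHalf d, φ x ^ 2 * ‖v j x‖ ^ 2)
        - h ^ 2 * (∫ x in upperHalf d, gradSqC d (fun y => (φ y : ℂ) * v j y) x)
        - h * b * (∫ x' : Euc (d - 1),
            φ (embedBdry d x') ^ 2 * ‖v j (embedBdry d x')‖ ^ 2))}

/-- The generalized eigenfunction `ψ_b(t)`. -/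
def psiF (b t : ℝ) : ℝ := (Real.cos t + b * Real.sin t) / Real.sqrt (1 + b ^ 2)

/-- The bound state `Ψ_b(t)` (vanishing for `b ≥ 0`). -/
def psiBig (b t : ℝ) : ℝ := if b < 0 then Real.sqrt (-2 * b) * Real.exp (b * t) else 0

/-- The function `I_b(t)`. -/
def Ifun (d : ℕ) (b t : ℝ) : ℝ :=
  ∫ p in (0 : ℝ)..1, (1 - p ^ 2) ^ (((d : ℝ) + 1) / 2) *
    ((p ^ 2 - b ^ 2) / (p ^ 2 + b ^ 2) * Real.cos (2 * t * p) +
      2 * p * b / (p ^ 2 + b ^ 2) * Real.sin (2 * t * p))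

/-- The localization scale `l(u) = ½(1 + (dist(u,Ωᶜ)² + l₀²)^{-1/2})⁻¹`. -/
def radFun (d : ℕ) (Ω : Set (Euc d)) (l₀ : ℝ) (u : Euc d) : ℝ :=
  (1 / 2) * (1 + (Real.sqrt (Metric.infDist u Ωᶜ ^ 2 + l₀ ^ 2))⁻¹)⁻¹

end
/-- **Interior ball condition implies null boundary** (Lemma A.2 of Frank–Geisinger):
if a bounded set `A ⊂ ℝⁿ` admits at every boundary point an interior tangent ball of a
fixed radius `ρ > 0`, then `∂A` has Lebesgue measure zero. -/
theorem interior_ball_boundary_null (n : ℕ) (hn : 1 ≤ n) (A : Set (Euc n))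
    (hA : Bornology.IsBounded A) (ρ : ℝ) (hρ : 0 < ρ)
    (hball : ∀ x ∈ frontier A, ∃ c : Euc n,
      x ∈ Metric.sphere c ρ ∧ Metric.ball c ρ ⊆ A) :
    volume (frontier A) = 0 := by
  classical
  haveI : Nontrivial (Euc n) :=
    Module.nontrivial_of_finrank_pos (R := ℝ)
      (by rw [finrank_euclideanSpace_fin]; omega)
  set s := frontier A with hs_def
  have hs : MeasurableSet s := isClosed_frontier.measurableSet
  by_contra hpos
  -- density point
  have hres : (volume : Measure (Euc n)).restrict s ≠ 0 := by
    intro h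
    apply hpos
    have := congrArg (fun μ : Measure (Euc n) => μ s) h
    simpa [Measure.restrict_apply hs] using this
  haveI : NeBot (ae ((volume : Measure (Euc n)).restrict s)) := ae_neBot.mpr hres
  have hae := (Besicovitch.ae_tendsto_measure_inter_div (volume : Measure (Euc n)) s).and
    (ae_restrict_mem hs)
  obtain ⟨x, hxt, hxs⟩ := hae.exists
  obtain ⟨c, hc1, hc2⟩ := hball x hxs
  have hxc : dist x c = ρ := Metric.mem_sphere.mp hc1
  have hballint : Metric.ball c ρ ⊆ interior A :=
    interior_maximal hc2 Metric.isOpen_ball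
  -- the constant
  set κ : ℝ≥0∞ := ENNReal.ofReal ((1 / 2 : ℝ) ^ n) with hκdef
  have hκpos : κ ≠ 0 :=
    ne_of_gt (ENNReal.ofReal_pos.mpr (by positivity))
  have hκle : κ ≤ 1 := by
    rw [hκdef, ← ENNReal.ofReal_one]
    exact ENNReal.ofReal_le_ofReal (pow_le_one₀ (by norm_num) (by norm_num))
  -- key estimate
  have key : ∀ r ∈ Set.Ioc (0 : ℝ) ρ,
      volume (s ∩ Metric.closedBall x r) / volume (Metric.closedBall x r) ≤ 1 - κ := by
    intro r hr
    obtain ⟨hr0, hrρ⟩ := hr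
    set t : ℝ := r / (2 * ρ) with ht_def
    have ht0 : 0 < t := by positivity
    have ht2 : t ≤ 1 / 2 := by
      rw [ht_def, div_le_div_iff₀ (by positivity) (by norm_num)]
      nlinarith
    set cr : Euc n := x + t • (c - x) with hcr_def
    have hdcx : dist cr x = r / 2 := by
      rw [dist_eq_norm]
      have : cr - x = t • (c - x) := by rw [hcr_def]; abel
      rw [this, norm_smul, Real.norm_eq_abs, abs_of_pos ht0,
        ← dist_eq_norm, dist_comm c x, hxc, ht_def]
      field_simp
    have hdcc : dist cr c = ρ - r / 2 := by
      rw [dist_eq_norm]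
      have : cr - c = (1 - t) • (x - c) := by rw [hcr_def]; module
      rw [this, norm_smul, Real.norm_eq_abs,
        abs_of_nonneg (by linarith : (0:ℝ) ≤ 1 - t),
        ← dist_eq_norm, hxc, ht_def]
      field_simp
    -- the small ball is inside closedBall x r and disjoint from s
    have hsub1 : Metric.ball cr (r / 2) ⊆ Metric.closedBall x r := by
      intro y hy
      have := Metric.mem_ball.mp hy
      have := dist_triangle y cr x
      rw [Metric.mem_closedBall]
      rw [hdcx] at this
      linarith
    have hsub2 : Metric.ball cr (r / 2) ⊆ Metric.ball c ρ := by
      intro y hy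
      have hy' := Metric.mem_ball.mp hy
      have := dist_triangle y cr c
      rw [Metric.mem_ball]
      rw [hdcc] at this
      linarith
    have hdisj : Disjoint (s ∩ Metric.closedBall x r) (Metric.ball cr (r / 2)) := by
      rw [Set.disjoint_left]
      rintro y ⟨hys, -⟩ hyb
      exact (hs_def ▸ hys).2 (hballint (hsub2 hyb))
    -- measures
    set V := volume (Metric.closedBall x r) with hV_def
    have hV0 : V ≠ 0 :=
      ((Metric.measure_ball_pos volume x hr0).trans_le
        (measure_mono Metric.ball_subset_closedBall)).ne'
    have hVt : V ≠ ∞ := (measure_closedBall_lt_top).ne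
    have hW : volume (Metric.ball cr (r / 2)) = κ * V := by
      rw [hV_def, Measure.addHaar_closedBall volume x hr0.le,
        Measure.addHaar_ball volume cr (by positivity : (0:ℝ) ≤ r / 2),
        finrank_euclideanSpace_fin, hκdef, ← mul_assoc, ← ENNReal.ofReal_mul (by positivity),
        ← mul_pow]
      ring_nf
    have hadd : volume (s ∩ Metric.closedBall x r) + κ * V ≤ V := by
      rw [← hW, ← measure_union hdisj Metric.isOpen_ball.measurableSet]
      exact measure_mono (Set.union_subset Set.inter_subset_right hsub1)
    have hle : volume (s ∩ Metric.closedBall x r) ≤ (1 - κ) * V := by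
      have h1 : volume (s ∩ Metric.closedBall x r) ≤ V - κ * V :=
        ENNReal.le_sub_of_add_le_right (by finiteness) hadd
      have h2 : (1 - κ) * V = V - κ * V := by
        rw [ENNReal.sub_mul (fun _ _ => hVt), one_mul]
      rw [h2]; exact h1
    exact (ENNReal.div_le_iff hV0 hVt).mpr hle
  -- contradiction
  have hev : ∀ᶠ r in 𝓝[>] (0 : ℝ),
      volume (s ∩ Metric.closedBall x r) / volume (Metric.closedBall x r) ≤ 1 - κ := by
    filter_upwards [Ioc_mem_nhdsGT_of_mem ⟨le_refl 0, hρ⟩] with r hr using key r hr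
  have hle1 : (1 : ℝ≥0∞) ≤ 1 - κ := le_of_tendsto hxt hev
  have : (1 : ℝ≥0∞) - κ < 1 := ENNReal.sub_lt_self ENNReal.one_ne_top one_ne_zero hκpos
  exact absurd hle1 (not_le.mpr this)
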